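/- Let Y be a real Gaussian random variable with mean μ and standard deviation s > 0, and let T ∈ ℝ. Then the expected improvement E[max(T − Y, 0)] admits the closed form (T − μ)·Φ((T − μ)/s) + s·φ((T − μ)/s), where Φ is the standard normal cumulative distribution function and φ is the standard normal probability density function. -/

import Mathlib

open MeasureTheory ProbabilityTheory Real Set Filter

lemma std_pdf_eq (x : ℝ) : gaussianPDFReal 0 1 x
    = (Real.sqrt (2 * Real.pi))⁻¹ * Real.exp (-(1/2) * x ^ 2) := by
  simp only [gaussianPDFReal, NNReal.coe_one, mul_one, sub_zero]
  ring_nf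

lemma integrable_id_mul_std_pdf : Integrable (fun x : ℝ => x * gaussianPDFReal 0 1 x) := by
  have h := (integrable_mul_exp_neg_mul_sq (b := 1/2) (by norm_num)).const_mul
    ((Real.sqrt (2 * Real.pi))⁻¹)
  refine h.congr (Filter.Eventually.of_forall fun x => ?_)
  simp only [std_pdf_eq]
  ring

set_option maxHeartbeats 1000000 in
lemma hasDerivAt_neg_std_pdf (x : ℝ) :
    HasDerivAt (fun y => -gaussianPDFReal 0 1 y) (x * gaussianPDFReal 0 1 x) x := by
  have h1 : HasDerivAt (fun y : ℝ => -(1/2) * y ^ 2) (-(1/2) * (2 * x)) x := by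
    simpa using (hasDerivAt_pow 2 x).const_mul (-(1/2) : ℝ)
  have h2 : HasDerivAt (fun y : ℝ => Real.exp (-(1/2) * y ^ 2))
      (Real.exp (-(1/2) * x ^ 2) * (-(1/2) * (2 * x))) x := h1.exp
  have h3 := h2.const_mul (-(Real.sqrt (2 * Real.pi))⁻¹)
  have key : (fun y => -gaussianPDFReal 0 1 y)
      = fun y => -(Real.sqrt (2 * Real.pi))⁻¹ * Real.exp (-(1/2) * y ^ 2) := by
    funext y; rw [std_pdf_eq]; ring
  have h4 : HasDerivAt (fun y => -gaussianPDFReal 0 1 y)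
      (-(Real.sqrt (2 * Real.pi))⁻¹ * (Real.exp (-(1/2) * x ^ 2) * (-(1/2) * (2 * x)))) x := by
    rw [key]; exact h3
  have h5 : -(Real.sqrt (2 * Real.pi))⁻¹ * (Real.exp (-(1/2) * x ^ 2) * (-(1/2) * (2 * x)))
      = x * gaussianPDFReal 0 1 x := by
    rw [std_pdf_eq]; ring
  exact h5 ▸ h4

lemma tendsto_neg_std_pdf_atBot :
    Tendsto (fun y => -gaussianPDFReal 0 1 y) atBot (nhds 0) := by
  have hsq : Tendsto (fun y : ℝ => y ^ 2) atBot atTop := by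
    have h1 : Tendsto (fun y : ℝ => y ^ 2) atTop atTop :=
      tendsto_pow_atTop (two_ne_zero)
    have h2 : Tendsto (fun y : ℝ => -y) atBot atTop := tendsto_neg_atBot_atTop
    have h3 := h1.comp h2
    simpa [Function.comp_def, neg_sq] using h3
  have harg : Tendsto (fun y : ℝ => -(1/2) * y ^ 2) atBot atBot := by
    exact Tendsto.const_mul_atTop_of_neg (by norm_num) hsq
  have hexp : Tendsto (fun y : ℝ => Real.exp (-(1/2) * y ^ 2)) atBot (nhds 0) :=
    Real.tendsto_exp_atBot.comp harg
  have := (hexp.const_mul (-(Real.sqrt (2 * Real.pi))⁻¹))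
  simpa [std_pdf_eq, mul_comm, neg_mul] using this

lemma integral_Iic_id_mul_std_pdf (c : ℝ) :
    ∫ x in Iic c, x * gaussianPDFReal 0 1 x = -gaussianPDFReal 0 1 c := by
  have := integral_Iic_of_hasDerivAt_of_tendsto' (a := c)
    (f := fun y => -gaussianPDFReal 0 1 y) (f' := fun x => x * gaussianPDFReal 0 1 x)
    (fun x _ => hasDerivAt_neg_std_pdf x) integrable_id_mul_std_pdf.integrableOn
    tendsto_neg_std_pdf_atBot
  simpa using this

lemma std_cdf_eq (c : ℝ) :
    cdf (gaussianReal 0 1) c = ∫ x in Iic c, gaussianPDFReal 0 1 x := by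
  rw [cdf_eq_real, measureReal_def, gaussianReal_apply_eq_integral 0 one_ne_zero,
    ENNReal.toReal_ofReal (integral_nonneg fun x => gaussianPDFReal_nonneg 0 1 x)]

lemma std_EI (c : ℝ) : ∫ x, max (c - x) 0 ∂(gaussianReal 0 1)
    = c * cdf (gaussianReal 0 1) c + gaussianPDFReal 0 1 c := by
  have hmeas : Measurable fun x => (gaussianPDFReal 0 1 x).toNNReal :=
    (measurable_gaussianPDFReal 0 1).real_toNNReal
  have hrw : ∫ x, max (c - x) 0 ∂(gaussianReal 0 1)
      = ∫ x, gaussianPDFReal 0 1 x * max (c - x) 0 := by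
    rw [gaussianReal_of_var_ne_zero 0 one_ne_zero]
    have : volume.withDensity (gaussianPDF 0 1)
        = volume.withDensity (fun x => ((gaussianPDFReal 0 1 x).toNNReal : ENNReal)) := rfl
    rw [this, integral_withDensity_eq_integral_smul hmeas]
    congr 1; funext x
    rw [NNReal.smul_def, Real.coe_toNNReal _ (gaussianPDFReal_nonneg 0 1 x), smul_eq_mul]
  rw [hrw]
  set g := fun x => gaussianPDFReal 0 1 x * max (c - x) 0 with hg
  have h1 : Integrable (fun x => c * gaussianPDFReal 0 1 x) :=
    (integrable_gaussianPDFReal 0 1).const_mul c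
  have h3 : Integrable (fun x => gaussianPDFReal 0 1 x * (c - x)) := by
    refine (h1.sub integrable_id_mul_std_pdf).congr (Filter.Eventually.of_forall fun x => ?_)
    simp only [Pi.sub_apply]
    ring
  have hIic : IntegrableOn g (Iic c) := by
    refine (h3.integrableOn).congr_fun (fun x hx => ?_) measurableSet_Iic
    simp only [hg]
    rw [max_eq_left (by simp at hx; linarith)]
  have hIoi : IntegrableOn g (Ioi c) := by
    refine (integrableOn_zero).congr_fun (fun x hx => ?_) measurableSet_Ioi
    simp only [hg]
    rw [max_eq_right (by simp at hx; linarith), mul_zero]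
  rw [← intervalIntegral.integral_Iic_add_Ioi hIic hIoi]
  have hzero : ∫ x in Ioi c, g x = 0 := by
    rw [setIntegral_congr_fun measurableSet_Ioi (g := fun _ => (0:ℝ))
      (fun x hx => by simp only [hg]; rw [max_eq_right (by simp at hx; linarith), mul_zero])]
    simp
  rw [hzero, add_zero]
  have heq : ∫ x in Iic c, g x
      = ∫ x in Iic c, (c * gaussianPDFReal 0 1 x - x * gaussianPDFReal 0 1 x) := by
    refine setIntegral_congr_fun measurableSet_Iic (fun x hx => ?_)
    simp only [hg]
    rw [max_eq_left (by simp at hx; linarith)]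
    ring
  rw [heq, integral_sub (h1.integrableOn) (integrable_id_mul_std_pdf.integrableOn),
    integral_const_mul, integral_Iic_id_mul_std_pdf, std_cdf_eq]
  ring

/-- Closed form of the Expected Improvement: if `Y` is Gaussian with mean `μ` and
standard deviation `s > 0`, then `E[max (T − Y) 0] = (T − μ)·Φ((T − μ)/s) + s·φ((T − μ)/s)`,
where `Φ` is the standard normal CDF and `φ` the standard normal PDF. -/
theorem expected_improvement_closed_form {Ω : Type*} [MeasurableSpace Ω]
    (P : Measure Ω) [IsProbabilityMeasure P]
    (Y : Ω → ℝ) (hYmeas : Measurable Y)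
    (μ s T : ℝ) (hs : 0 < s)
    (hY : Measure.map Y P = gaussianReal μ (Real.toNNReal (s ^ 2))) :
    ∫ ω, max (T - Y ω) 0 ∂P =
      (T - μ) * cdf (gaussianReal 0 1) ((T - μ) / s)
        + s * gaussianPDFReal 0 1 ((T - μ) / s) := by
  have hcont : Continuous fun x : ℝ => max (T - x) 0 := by
    fun_prop
  have hsm : AEStronglyMeasurable (fun x : ℝ => max (T - x) 0) (Measure.map Y P) :=
    hcont.aestronglyMeasurable
  have hmap : gaussianReal μ (Real.toNNReal (s ^ 2))
      = Measure.map (fun z => s * z + μ) (gaussianReal 0 1) := by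
    have h1 : Measure.map (fun z : ℝ => s * z) (gaussianReal 0 1)
        = gaussianReal 0 (⟨s ^ 2, sq_nonneg s⟩ * 1) := by
      have h := gaussianReal_map_const_mul (μ := 0) (v := 1) s
      rw [mul_zero] at h
      exact h
    have hv : (⟨s ^ 2, sq_nonneg s⟩ * 1 : NNReal) = Real.toNNReal (s ^ 2) := by
      apply NNReal.coe_injective
      show ((NNReal.mk (s ^ 2) (sq_nonneg s) * 1 : NNReal) : ℝ) = _
      simp [Real.coe_toNNReal _ (sq_nonneg s)]
    have h2 : Measure.map (fun z : ℝ => s * z + μ) (gaussianReal 0 1)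
        = Measure.map (· + μ) (Measure.map (fun z : ℝ => s * z) (gaussianReal 0 1)) := by
      rw [Measure.map_map (measurable_id'.add_const μ) (measurable_const_mul s)]
      rfl
    rw [h2, h1, hv, gaussianReal_map_add_const, zero_add]
  rw [← integral_map hYmeas.aemeasurable hsm, hY, hmap,
    integral_map ((measurable_const_mul s).add_const μ).aemeasurable
      hcont.aestronglyMeasurable]
  have hz : ∀ z : ℝ, max (T - (s * z + μ)) 0 = s * max ((T - μ) / s - z) 0 := by
    intro z
    rw [mul_max_of_nonneg _ _ hs.le, mul_zero]
    congr 1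
    field_simp
    ring
  simp_rw [hz]
  rw [integral_const_mul, std_EI]
  have h : s * ((T - μ) / s) = T - μ := mul_div_cancel₀ _ hs.ne'
  rw [mul_add, ← mul_assoc, h]
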